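/- The regular representation F[G] of G = D_{2p} (the group algebra of G over F, with G acting by left multiplication) is isomorphic as an F-representation of G to the direct sum ⊕_{i=1}^{(p-1)/2} (W_i ⊕ W_i) ⊕ W_0. -/

import Mathlib

section RegularRepAux
variable {F : Type*} [Field F]
open Module


theorem aux_isInternal {F ι κ M : Type*} [Field F] [DecidableEq κ] [AddCommGroup M] [Module F M]
    (b : Basis ι F M) (f : ι → κ) :
    DirectSum.IsInternal (fun k : κ => Submodule.span F (⇑b '' (f ⁻¹' {k}))) := by
  classical
  apply DirectSum.isInternal_submodule_of_iSupIndep_of_iSup_eq_top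
  · rw [iSupIndep_def]
    intro k
    rw [disjoint_iff_inf_le]
    intro x hx
    obtain ⟨h1, h2⟩ := hx
    have h2' : x ∈ Submodule.span F (⇑b '' (f ⁻¹' {k})ᶜ) := by
      refine (iSup_le fun j => iSup_le fun hj => Submodule.span_mono
        (Set.image_mono ?_)) h2
      intro a ha
      simp only [Set.mem_preimage, Set.mem_singleton_iff] at ha
      simp [Set.mem_preimage, ha, hj]
    have s1 := b.repr_support_subset_of_mem_span _ h1
    have s2 := b.repr_support_subset_of_mem_span _ h2'
    have : b.repr x = 0 := by
      ext i
      by_cases hi : i ∈ (b.repr x).support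
      · exact absurd (s2 hi) (by simpa using s1 hi)
      · simpa using hi
    simpa using congrArg b.repr.symm this
  · rw [← Submodule.span_iUnion, ← Set.image_iUnion]
    have : (⋃ k, f ⁻¹' {k}) = Set.univ := by
      ext a; simp
    rw [this, Set.image_univ, b.span_eq]

noncomputable def Avec (p : ℕ) [NeZero p] (F : Type*) [Field F] (lam : F) :
    ZMod p ⊕ ZMod p → (DihedralGroup p →₀ F) :=
  Sum.elim
    (fun i => ∑ m : ZMod p, lam ^ (i.val * m.val) • Finsupp.single (DihedralGroup.r m) (1 : F))
    (fun i => ∑ m : ZMod p, lam ^ (i.val * m.val) • Finsupp.single (DihedralGroup.sr m) (1 : F))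

def dihedralEquiv (p : ℕ) : (ZMod p ⊕ ZMod p) ≃ DihedralGroup p where
  toFun := Sum.elim DihedralGroup.r DihedralGroup.sr
  invFun g := match g with
    | DihedralGroup.r i => Sum.inl i
    | DihedralGroup.sr i => Sum.inr i
  left_inv x := by rcases x with i | i <;> rfl
  right_inv g := by rcases g with i | i <;> rfl

theorem Avec_rr (p : ℕ) [NeZero p] (lam : F) (j i : ZMod p) :
    (Avec p F lam (Sum.inl j)) (DihedralGroup.r i) = lam ^ (j.val * i.val) := by
  classical
  simp only [Avec, Sum.elim_inl]
  rw [Finsupp.finset_sum_apply, Finset.sum_eq_single i]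
  · simp
  · intro m _ hm; simp [Finsupp.single_apply, hm]
  · simp

theorem Avec_ss (p : ℕ) [NeZero p] (lam : F) (j i : ZMod p) :
    (Avec p F lam (Sum.inr j)) (DihedralGroup.sr i) = lam ^ (j.val * i.val) := by
  classical
  simp only [Avec, Sum.elim_inr]
  rw [Finsupp.finset_sum_apply, Finset.sum_eq_single i]
  · simp
  · intro m _ hm; simp [Finsupp.single_apply, hm]
  · simp

theorem Avec_rs (p : ℕ) [NeZero p] (lam : F) (j i : ZMod p) :
    (Avec p F lam (Sum.inl j)) (DihedralGroup.sr i) = 0 := by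
  classical
  simp only [Avec, Sum.elim_inl]
  rw [Finsupp.finset_sum_apply, Finset.sum_eq_zero]
  intro m _; simp [Finsupp.single_apply]

theorem Avec_sr (p : ℕ) [NeZero p] (lam : F) (j i : ZMod p) :
    (Avec p F lam (Sum.inr j)) (DihedralGroup.r i) = 0 := by
  classical
  simp only [Avec, Sum.elim_inr]
  rw [Finsupp.finset_sum_apply, Finset.sum_eq_zero]
  intro m _; simp [Finsupp.single_apply]

/-- the Vandermonde-type matrix over `ZMod p` is invertible -/
theorem vdet_ne_zero (p : ℕ) [NeZero p] (lam : F) (hlam : IsPrimitiveRoot lam p) :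
    Matrix.det (Matrix.of fun i j : ZMod p => lam ^ (i.val * j.val)) ≠ 0 := by
  classical
  set zf : ZMod p ≃ Fin p :=
    { toFun := fun a => ⟨a.val, ZMod.val_lt a⟩
      invFun := fun i => ((i : ℕ) : ZMod p)
      left_inv := fun a => by simp [ZMod.natCast_val, ZMod.cast_id]
      right_inv := fun i => by
        ext
        simp [ZMod.val_cast_of_lt i.isLt] }
  have : Matrix.det (Matrix.of fun i j : ZMod p => lam ^ (i.val * j.val)) =
      Matrix.det (Matrix.vandermonde (fun i : Fin p => lam ^ (i : ℕ))) := by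
    rw [← Matrix.det_reindex_self zf (Matrix.of fun i j : ZMod p => lam ^ (i.val * j.val))]
    congr 1
    ext i j
    simp only [Matrix.reindex_apply, Matrix.submatrix_apply, Matrix.of_apply,
      Matrix.vandermonde]
    have hv : ∀ k : Fin p, (zf.symm k).val = (k : ℕ) := fun k => ZMod.val_cast_of_lt k.isLt
    rw [hv, hv, pow_mul]
  rw [this, Matrix.det_vandermonde]
  apply Finset.prod_ne_zero_iff.mpr
  intro i _
  apply Finset.prod_ne_zero_iff.mpr
  intro j hj
  rw [Finset.mem_Ioi] at hj
  rw [sub_ne_zero]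
  intro h
  exact absurd (hlam.pow_inj j.isLt i.isLt h) (by omega)

theorem Avec_li_span (p : ℕ) [NeZero p] (lam : F) (hlam : IsPrimitiveRoot lam p) :
    LinearIndependent F (Avec p F lam) ∧
      Submodule.span F (Set.range (Avec p F lam)) = ⊤ := by
  classical
  set e : Basis (ZMod p ⊕ ZMod p) F (DihedralGroup p →₀ F) :=
    (Finsupp.basisSingleOne).reindex (dihedralEquiv p).symm with he
  rw [Basis.is_basis_iff_det e]
  have hM : e.toMatrix (Avec p F lam) =
      Matrix.fromBlocks (Matrix.of fun i j : ZMod p => lam ^ (i.val * j.val)) 0 0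
        (Matrix.of fun i j : ZMod p => lam ^ (i.val * j.val)) := by
    ext x y
    have hrepr : ∀ (v : DihedralGroup p →₀ F) (x : ZMod p ⊕ ZMod p),
        e.repr v x = v (dihedralEquiv p x) := by
      intro v x
      rw [he, Basis.repr_reindex_apply]
      simp [Finsupp.basisSingleOne]
    rw [Basis.toMatrix_apply, hrepr]
    rcases x with i | i <;> rcases y with j | j <;>
      simp [dihedralEquiv, Avec_rr, Avec_rs, Avec_sr, Avec_ss, Matrix.fromBlocks, Nat.mul_comm]
  rw [Basis.det_apply, hM, Matrix.det_fromBlocks_zero₂₁]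
  have h1 := vdet_ne_zero p lam hlam
  exact (IsUnit.mul (isUnit_iff_ne_zero.mpr h1) (isUnit_iff_ne_zero.mpr h1))

noncomputable def AvecBasis (p : ℕ) [NeZero p] (lam : F) (hlam : IsPrimitiveRoot lam p) :
    Basis (ZMod p ⊕ ZMod p) F (DihedralGroup p →₀ F) :=
  Basis.mk (Avec_li_span p lam hlam).1 (Avec_li_span p lam hlam).2.ge

theorem AvecBasis_coe (p : ℕ) [NeZero p] (lam : F) (hlam : IsPrimitiveRoot lam p) :
    ⇑(AvecBasis p lam hlam) = Avec p F lam := by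
  simp [AvecBasis]

theorem pow_mod_p {p : ℕ} {lam : F} (hlam : IsPrimitiveRoot lam p) (a : ℕ) :
    lam ^ a = lam ^ (a % p) := by
  conv_lhs => rw [← Nat.div_add_mod a p]
  rw [pow_add, pow_mul, hlam.pow_eq_one, one_pow, one_mul]

theorem pow_congr {p : ℕ} {lam : F} (hlam : IsPrimitiveRoot lam p) {a b : ℕ}
    (h : (a : ZMod p) = (b : ZMod p)) : lam ^ a = lam ^ b := by
  rw [ZMod.natCast_eq_natCast_iff] at h
  rw [pow_mod_p hlam a, pow_mod_p hlam b, h]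
noncomputable def thetaC (p : ℕ) (F : Type*) [Field F] (g : DihedralGroup p) :
    (DihedralGroup p →₀ F) →ₗ[F] (DihedralGroup p →₀ F) :=
  (MonoidAlgebra.coeffLinearEquiv (S := F) (M := DihedralGroup p) F).toLinearMap ∘ₗ
    Representation.ofMulAction F (DihedralGroup p) (DihedralGroup p) g ∘ₗ
    (MonoidAlgebra.coeffLinearEquiv (S := F) (M := DihedralGroup p) F).symm.toLinearMap

theorem thetaC_eq (p : ℕ) (F : Type*) [Field F] (g : DihedralGroup p) :
    thetaC p F g = Finsupp.lmapDomain F F (g • ·) :=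
  LinearMap.ext fun v => by simp [thetaC, Representation.ofMulAction_def]

theorem theta_r_inl (p : ℕ) [NeZero p] {lam : F} (hlam : IsPrimitiveRoot lam p) (i : ZMod p) :
    thetaC p F (DihedralGroup.r 1)
      (Avec p F lam (Sum.inl i)) = lam ^ (p - i.val) • Avec p F lam (Sum.inl i) := by
  rw [thetaC_eq]
  simp only [Avec, Sum.elim_inl, map_sum, map_smul, Finsupp.lmapDomain_apply, Finsupp.mapDomain_single,
    Finset.smul_sum, smul_smul]
  rw [Fintype.sum_equiv (Equiv.addLeft (1 : ZMod p))
    (fun m => lam ^ (i.val * m.val) • Finsupp.single ((DihedralGroup.r 1 :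
      DihedralGroup p) • DihedralGroup.r m) (1 : F))
    (fun m => (lam ^ (p - i.val) * lam ^ (i.val * m.val)) •
      Finsupp.single (DihedralGroup.r m) (1 : F))]
  intro m
  have h1 : (DihedralGroup.r 1 : DihedralGroup p) • DihedralGroup.r m
      = DihedralGroup.r ((Equiv.addLeft (1 : ZMod p)) m) := by
    simp [DihedralGroup.r_mul_r]
  rw [h1]
  congr 1
  rw [← pow_add]
  apply pow_congr hlam
  have hip : i.val ≤ p := le_of_lt (ZMod.val_lt i)
  push_cast [Nat.cast_sub hip, ZMod.natCast_val, ZMod.cast_id, ZMod.natCast_self]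
  simp only [Equiv.coe_addLeft]
  ring

theorem theta_r_inr (p : ℕ) [NeZero p] {lam : F} (hlam : IsPrimitiveRoot lam p) (i : ZMod p) :
    thetaC p F (DihedralGroup.r 1)
      (Avec p F lam (Sum.inr i)) = lam ^ i.val • Avec p F lam (Sum.inr i) := by
  rw [thetaC_eq]
  simp only [Avec, Sum.elim_inr, map_sum, map_smul, Finsupp.lmapDomain_apply, Finsupp.mapDomain_single,
    Finset.smul_sum, smul_smul]
  rw [Fintype.sum_equiv (Equiv.subRight (1 : ZMod p))
    (fun m => lam ^ (i.val * m.val) • Finsupp.single ((DihedralGroup.r 1 :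
      DihedralGroup p) • DihedralGroup.sr m) (1 : F))
    (fun m => (lam ^ i.val * lam ^ (i.val * m.val)) •
      Finsupp.single (DihedralGroup.sr m) (1 : F))]
  intro m
  have h1 : (DihedralGroup.r 1 : DihedralGroup p) • DihedralGroup.sr m
      = DihedralGroup.sr ((Equiv.subRight (1 : ZMod p)) m) := by
    simp [DihedralGroup.r_mul_sr, Equiv.subRight]
  rw [h1]
  congr 1
  rw [← pow_add]
  apply pow_congr hlam
  push_cast [ZMod.natCast_val, ZMod.cast_id]
  simp only [Equiv.subRight_apply]
  ring

theorem theta_sr_inl (p : ℕ) [NeZero p] (lam : F) (i : ZMod p) :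
    thetaC p F (DihedralGroup.sr 0)
      (Avec p F lam (Sum.inl i)) = Avec p F lam (Sum.inr i) := by
  rw [thetaC_eq]
  simp only [Avec, Sum.elim_inl, Sum.elim_inr, map_sum, map_smul,
    Finsupp.lmapDomain_apply, Finsupp.mapDomain_single]
  apply Finset.sum_congr rfl
  intro m _
  have h1 : (DihedralGroup.sr 0 : DihedralGroup p) • DihedralGroup.r m = DihedralGroup.sr m := by
    rw [smul_eq_mul, DihedralGroup.sr_mul_r, zero_add]
  rw [h1]

theorem theta_sr_inr (p : ℕ) [NeZero p] (lam : F) (i : ZMod p) :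
    thetaC p F (DihedralGroup.sr 0)
      (Avec p F lam (Sum.inr i)) = Avec p F lam (Sum.inl i) := by
  rw [thetaC_eq]
  simp only [Avec, Sum.elim_inl, Sum.elim_inr, map_sum, map_smul,
    Finsupp.lmapDomain_apply, Finsupp.mapDomain_single]
  apply Finset.sum_congr rfl
  intro m _
  have h1 : (DihedralGroup.sr 0 : DihedralGroup p) • DihedralGroup.sr m = DihedralGroup.r m := by
    rw [smul_eq_mul, DihedralGroup.sr_mul_sr, sub_zero]
  rw [h1]

theorem stable_lemma {p : ℕ} [NeZero p] {M : Type*} [AddCommGroup M] [Module F M]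
    (θ : Representation F (DihedralGroup p) M) (W : Submodule F M)
    (hr : ∀ v ∈ W, θ (DihedralGroup.r 1) v ∈ W)
    (hs : ∀ v ∈ W, θ (DihedralGroup.sr 0) v ∈ W) :
    ∀ (g : DihedralGroup p) (v : M), v ∈ W → θ g v ∈ W := by
  have hrn : ∀ (n : ℕ) (v : M), v ∈ W → θ (DihedralGroup.r (n : ZMod p)) v ∈ W := by
    intro n
    induction n with
    | zero => intro v hv; simpa [← DihedralGroup.one_def] using hv
    | succ n ih =>
      intro v hv
      have : (DihedralGroup.r ((n + 1 : ℕ) : ZMod p) : DihedralGroup p)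
          = DihedralGroup.r 1 * DihedralGroup.r (n : ZMod p) := by
        rw [DihedralGroup.r_mul_r]
        push_cast
        ring_nf
      rw [this, map_mul, Module.End.mul_apply]
      exact hr _ (ih v hv)
  have hra : ∀ (a : ZMod p) (v : M), v ∈ W → θ (DihedralGroup.r a) v ∈ W := by
    intro a v hv
    have : ((a.val : ℕ) : ZMod p) = a := ZMod.natCast_rightInverse a
    simpa [this] using hrn a.val v hv
  intro g v hv
  rcases g with a | a
  · exact hra a v hv
  · have : (DihedralGroup.sr a : DihedralGroup p)
        = DihedralGroup.sr 0 * DihedralGroup.r a := by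
      rw [DihedralGroup.sr_mul_r, zero_add]
    rw [this, map_mul, Module.End.mul_apply]
    exact hs _ (hra a v hv)

theorem stable_span_pair {p : ℕ} [NeZero p] {M : Type*} [AddCommGroup M] [Module F M]
    (θ : Representation F (DihedralGroup p) M) (v1 v2 : M) (c1 c2 : F)
    (h1 : θ (DihedralGroup.r 1) v1 = c1 • v1) (h2 : θ (DihedralGroup.r 1) v2 = c2 • v2)
    (h3 : θ (DihedralGroup.sr 0) v1 = v2) (h4 : θ (DihedralGroup.sr 0) v2 = v1) :
    ∀ (g : DihedralGroup p) (v : M), v ∈ Submodule.span F {v1, v2} →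
      θ g v ∈ Submodule.span F {v1, v2} := by
  have m1 : v1 ∈ Submodule.span F {v1, v2} :=
    Submodule.subset_span (Set.mem_insert _ _)
  have m2 : v2 ∈ Submodule.span F {v1, v2} :=
    Submodule.subset_span (Set.mem_insert_of_mem _ rfl)
  apply stable_lemma
  · intro v hv
    induction hv using Submodule.span_induction with
    | mem x hx =>
      rcases hx with rfl | rfl
      · rw [h1]; exact Submodule.smul_mem _ _ m1
      · rw [h2]; exact Submodule.smul_mem _ _ m2
    | zero => simp
    | add x y _ _ hx hy => rw [map_add]; exact Submodule.add_mem _ hx hy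
    | smul c x _ hx => rw [map_smul]; exact Submodule.smul_mem _ _ hx
  · intro v hv
    induction hv using Submodule.span_induction with
    | mem x hx =>
      rcases hx with rfl | rfl
      · rw [h3]; exact m2
      · rw [h4]; exact m1
    | zero => simp
    | add x y _ _ hx hy => rw [map_add]; exact Submodule.add_mem _ hx hy
    | smul c x _ hx => rw [map_smul]; exact Submodule.smul_mem _ _ hx

def gfun (p : ℕ) [NeZero p] (hp : 3 ≤ p) (hodd : p % 2 = 1) (a : ZMod p) :
    Fin ((p - 1) / 2) ⊕ Fin ((p - 1) / 2) ⊕ Unit :=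
  if h0 : a = 0 then Sum.inr (Sum.inr ())
  else if h : a.val ≤ (p - 1) / 2 then
    Sum.inl ⟨a.val - 1, by
      have := (ZMod.val_eq_zero a).not.mpr h0
      omega⟩
  else
    Sum.inr (Sum.inl ⟨p - 1 - a.val, by omega⟩)

theorem gfun_eq_inl (p : ℕ) [NeZero p] (hp : 3 ≤ p) (hodd : p % 2 = 1)
    (j : Fin ((p - 1) / 2)) (a : ZMod p) :
    gfun p hp hodd a = Sum.inl j ↔ a = (((j : ℕ) + 1 : ℕ) : ZMod p) := by
  have hjp : (j : ℕ) + 1 < p := by have := j.isLt; omega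
  have hval : ((((j : ℕ) + 1 : ℕ) : ZMod p)).val = (j : ℕ) + 1 := ZMod.val_cast_of_lt hjp
  unfold gfun
  by_cases h0 : a = 0
  · rw [dif_pos h0]
    simp only [reduceCtorEq, false_iff]
    intro hc
    rw [h0] at hc
    rw [← hc, ZMod.val_zero] at hval
    omega
  · rw [dif_neg h0]
    have hv0 : a.val ≠ 0 := (ZMod.val_eq_zero a).not.mpr h0
    have hvp : a.val < p := ZMod.val_lt a
    by_cases h1 : a.val ≤ (p - 1) / 2
    · rw [dif_pos h1]
      rw [Sum.inl.injEq, Fin.ext_iff, Fin.val_mk]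
      constructor
      · intro h
        have : a.val = (j : ℕ) + 1 := by omega
        rw [← ZMod.natCast_rightInverse a, this]
      · intro h
        subst h
        rw [hval]
        omega
    · rw [dif_neg h1]
      simp only [reduceCtorEq, false_iff]
      intro hc
      rw [hc, hval] at h1
      have := j.isLt
      omega

theorem gfun_eq_inr_inl (p : ℕ) [NeZero p] (hp : 3 ≤ p) (hodd : p % 2 = 1)
    (j : Fin ((p - 1) / 2)) (a : ZMod p) :
    gfun p hp hodd a = Sum.inr (Sum.inl j) ↔ a = ((p - ((j : ℕ) + 1) : ℕ) : ZMod p) := by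
  have hjl := j.isLt
  have hjp : p - ((j : ℕ) + 1) < p := by omega
  have hval : (((p - ((j : ℕ) + 1) : ℕ) : ZMod p)).val = p - ((j : ℕ) + 1) :=
    ZMod.val_cast_of_lt hjp
  unfold gfun
  by_cases h0 : a = 0
  · rw [dif_pos h0]
    simp only [Sum.inr.injEq, reduceCtorEq, false_iff]
    intro hc
    rw [h0] at hc
    rw [← hc, ZMod.val_zero] at hval
    omega
  · rw [dif_neg h0]
    have hv0 : a.val ≠ 0 := (ZMod.val_eq_zero a).not.mpr h0
    have hvp : a.val < p := ZMod.val_lt a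
    by_cases h1 : a.val ≤ (p - 1) / 2
    · rw [dif_pos h1]
      simp only [reduceCtorEq, false_iff]
      intro hc
      rw [hc, hval] at h1
      omega
    · rw [dif_neg h1]
      rw [Sum.inr.injEq, Sum.inl.injEq, Fin.ext_iff, Fin.val_mk]
      constructor
      · intro h
        have : a.val = p - ((j : ℕ) + 1) := by omega
        rw [← ZMod.natCast_rightInverse a, this]
      · intro h
        subst h
        rw [hval]
        omega

theorem gfun_eq_inr_inr (p : ℕ) [NeZero p] (hp : 3 ≤ p) (hodd : p % 2 = 1)
    (u : Unit) (a : ZMod p) :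
    gfun p hp hodd a = Sum.inr (Sum.inr u) ↔ a = 0 := by
  unfold gfun
  by_cases h0 : a = 0
  · rw [dif_pos h0]
    simp [h0]
  · rw [dif_neg h0]
    by_cases h1 : a.val ≤ (p - 1) / 2
    · rw [dif_pos h1]
      simp [h0]
    · rw [dif_neg h1]
      simp [h0]

theorem li_pair {ι M : Type*} [AddCommGroup M] [Module F M] (b : Basis ι F M)
    {x y : ι} (h : x ≠ y) : LinearIndependent F ![b x, b y] := by
  have hinj : Function.Injective (![x, y] : Fin 2 → ι) := by
    intro s t hst
    fin_cases s <;> fin_cases t <;>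
      simp only [Matrix.cons_val_zero, Matrix.cons_val_one, Matrix.head_cons] at hst <;>
      first
        | rfl
        | exact absurd hst h
        | exact absurd hst.symm h
  have h2 : ⇑b ∘ (![x, y] : Fin 2 → ι) = ![b x, b y] := by
    funext t; fin_cases t <;> rfl
  rw [← h2]
  exact b.linearIndependent.comp _ hinj

theorem lam_inv_pow {p : ℕ} {lam : F} (hlam : IsPrimitiveRoot lam p) {e : ℕ} (he : e ≤ p) :
    lam⁻¹ ^ e = lam ^ (p - e) := by
  rw [inv_pow]
  exact inv_eq_of_mul_eq_one_left
    (by rw [← pow_add, Nat.sub_add_cancel he, hlam.pow_eq_one])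

end RegularRepAux

/-- The regular representation `F[G]` of `G = D_{2p}` (`p ≥ 3` odd, `F`
algebraically closed of characteristic two), i.e. the group algebra
`DihedralGroup p →₀ F` with `G` acting by left multiplication, is isomorphic
as an `F`-representation of `G` to `⊕_{i=1}^{(p-1)/2} (W_i ⊕ W_i) ⊕ W_0`:
it decomposes as an internal direct sum of `G`-stable submodules indexed by
`Fin ((p-1)/2) ⊕ Fin ((p-1)/2) ⊕ Unit`, where the `k`-th summand has a basis
`v1, v2` realizing `W_{i}` (with `i = k+1` for the first two blocks, `i = 0`
for the last one): `ρ v1 = λ⁻ⁱ v1`, `ρ v2 = λⁱ v2`, `σ v1 = v2`, `σ v2 = v1`. -/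
theorem regular_representation_decomposition
    (p : ℕ) (hp_odd : Odd p) (hp : 3 ≤ p)
    (F : Type*) [Field F] [IsAlgClosed F] [CharP F 2]
    (lam : F) (hlam : IsPrimitiveRoot lam p)
    (θ : Representation F (DihedralGroup p) (DihedralGroup p →₀ F))
    (hθ : ∀ g : DihedralGroup p, θ g =
      (MonoidAlgebra.coeffLinearEquiv (S := F) (M := DihedralGroup p) F).toLinearMap ∘ₗ
        Representation.ofMulAction F (DihedralGroup p) (DihedralGroup p) g ∘ₗ
        (MonoidAlgebra.coeffLinearEquiv (S := F) (M := DihedralGroup p) F).symm.toLinearMap) :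
    ∃ W : (Fin ((p - 1) / 2) ⊕ Fin ((p - 1) / 2) ⊕ Unit) →
        Submodule F (DihedralGroup p →₀ F),
      DirectSum.IsInternal W ∧
      (∀ (k : Fin ((p - 1) / 2) ⊕ Fin ((p - 1) / 2) ⊕ Unit) (g : DihedralGroup p)
          (v : DihedralGroup p →₀ F), v ∈ W k → θ g v ∈ W k) ∧
      (∀ k : Fin ((p - 1) / 2) ⊕ Fin ((p - 1) / 2) ⊕ Unit,
        ∃ v1 v2 : DihedralGroup p →₀ F,
          v1 ∈ W k ∧ v2 ∈ W k ∧
          W k = Submodule.span F {v1, v2} ∧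
          LinearIndependent F ![v1, v2] ∧
          θ (DihedralGroup.r 1) v1 =
            lam⁻¹ ^ (Sum.elim (fun j : Fin ((p - 1) / 2) => (j : ℕ) + 1)
              (Sum.elim (fun j : Fin ((p - 1) / 2) => (j : ℕ) + 1) (fun _ => 0)) k) • v1 ∧
          θ (DihedralGroup.r 1) v2 =
            lam ^ (Sum.elim (fun j : Fin ((p - 1) / 2) => (j : ℕ) + 1)
              (Sum.elim (fun j : Fin ((p - 1) / 2) => (j : ℕ) + 1) (fun _ => 0)) k) • v2 ∧
          θ (DihedralGroup.sr 0) v1 = v2 ∧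
          θ (DihedralGroup.sr 0) v2 = v1) := by
  classical
  haveI : NeZero p := ⟨by omega⟩
  have hodd : p % 2 = 1 := Nat.odd_iff.mp hp_odd
  have hθ' : ∀ g, θ g = thetaC p F g := hθ
  set κ := (Fin ((p - 1) / 2) ⊕ Fin ((p - 1) / 2) ⊕ Unit) with hκ
  set B := AvecBasis p lam hlam with hB
  have hBc : ⇑B = Avec p F lam := AvecBasis_coe p lam hlam
  set f : ZMod p ⊕ ZMod p → κ :=
    Sum.elim (gfun p hp hodd) (gfun p hp hodd) with hf
  set idx : κ → ZMod p :=
    Sum.elim (fun j : Fin ((p - 1) / 2) => (((j : ℕ) + 1 : ℕ) : ZMod p))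
      (Sum.elim (fun j : Fin ((p - 1) / 2) => ((p - ((j : ℕ) + 1) : ℕ) : ZMod p))
        (fun _ => 0)) with hidx
  have hg : ∀ (a : ZMod p) (k : κ), gfun p hp hodd a = k ↔ a = idx k := by
    intro a k
    rcases k with j | j | u
    · simpa [hidx] using gfun_eq_inl p hp hodd j a
    · simpa [hidx] using gfun_eq_inr_inl p hp hodd j a
    · simpa [hidx] using gfun_eq_inr_inr p hp hodd u a
  have hfiber : ∀ k : κ, f ⁻¹' {k} = {Sum.inl (idx k), Sum.inr (idx k)} := by
    intro k
    ext x
    rcases x with a | a <;>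
      simp [hf, hg a k]
  have hW : ∀ k : κ, Submodule.span F (⇑B '' (f ⁻¹' {k})) =
      Submodule.span F {Avec p F lam (Sum.inl (idx k)), Avec p F lam (Sum.inr (idx k))} := by
    intro k
    rw [hfiber k, hBc, Set.image_pair]
  refine ⟨fun k => Submodule.span F (⇑B '' (f ⁻¹' {k})), aux_isInternal B f, ?_, ?_⟩
  · -- stability
    intro k g v hv
    show θ g v ∈
      Submodule.span F (⇑B '' (f ⁻¹' {k}))
    have hv' : v ∈ Submodule.span F (⇑B '' (f ⁻¹' {k})) := hv
    rw [hW k] at hv' ⊢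
    exact stable_span_pair θ
      _ _ (lam ^ (p - (idx k).val)) (lam ^ (idx k).val)
      (by rw [hθ']; exact theta_r_inl p hlam (idx k)) (by rw [hθ']; exact theta_r_inr p hlam (idx k))
      (by rw [hθ']; exact theta_sr_inl p lam (idx k)) (by rw [hθ']; exact theta_sr_inr p lam (idx k)) g v hv'
  · intro k
    simp only [hθ']
    have hmem1 : Avec p F lam (Sum.inl (idx k)) ∈
        Submodule.span F (⇑B '' (f ⁻¹' {k})) := by
      rw [hW k]; exact Submodule.subset_span (Set.mem_insert _ _)
    have hmem2 : Avec p F lam (Sum.inr (idx k)) ∈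
        Submodule.span F (⇑B '' (f ⁻¹' {k})) := by
      rw [hW k]; exact Submodule.subset_span (Set.mem_insert_of_mem _ rfl)
    rcases k with j | j | u
    · -- first block : i = j+1
      have hival : (idx (Sum.inl j)).val = (j : ℕ) + 1 := by
        rw [hidx]
        exact ZMod.val_cast_of_lt (by have := j.isLt; omega)
      refine ⟨Avec p F lam (Sum.inl (idx (Sum.inl j))),
        Avec p F lam (Sum.inr (idx (Sum.inl j))), hmem1, hmem2, hW _, ?_, ?_, ?_, ?_, ?_⟩
      · rw [← hBc]
        exact li_pair B (by simp)
      · rw [theta_r_inl p hlam, hival, Sum.elim_inl,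
          lam_inv_pow hlam (by have := j.isLt; omega)]
      · rw [theta_r_inr p hlam, hival, Sum.elim_inl]
      · exact theta_sr_inl p lam _
      · exact theta_sr_inr p lam _
    · -- second block : i = p - (j+1)
      have hival : (idx (Sum.inr (Sum.inl j))).val = p - ((j : ℕ) + 1) := by
        rw [hidx]
        exact ZMod.val_cast_of_lt (by have := j.isLt; omega)
      refine ⟨Avec p F lam (Sum.inr (idx (Sum.inr (Sum.inl j)))),
        Avec p F lam (Sum.inl (idx (Sum.inr (Sum.inl j)))), hmem2, hmem1,
        (hW _).trans (by rw [Set.pair_comm]), ?_, ?_, ?_, ?_, ?_⟩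
      · rw [← hBc]
        exact li_pair B (by simp)
      · rw [theta_r_inr p hlam, hival, Sum.elim_inr, Sum.elim_inl,
          lam_inv_pow hlam (by have := j.isLt; omega)]
      · rw [theta_r_inl p hlam, hival, Sum.elim_inr, Sum.elim_inl]
        congr 2
        have := j.isLt
        omega
      · exact theta_sr_inr p lam _
      · exact theta_sr_inl p lam _
    · -- W_0 block : i = 0
      have hival : (idx (Sum.inr (Sum.inr u))).val = 0 := by
        rw [hidx]
        simp
      refine ⟨Avec p F lam (Sum.inl (idx (Sum.inr (Sum.inr u)))),
        Avec p F lam (Sum.inr (idx (Sum.inr (Sum.inr u)))), hmem1, hmem2, hW _, ?_, ?_, ?_, ?_, ?_⟩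
      · rw [← hBc]
        exact li_pair B (by simp)
      · rw [theta_r_inl p hlam, hival, Sum.elim_inr, Sum.elim_inr, Nat.sub_zero,
          hlam.pow_eq_one, pow_zero]
      · rw [theta_r_inr p hlam, hival, Sum.elim_inr, Sum.elim_inr]
      · exact theta_sr_inl p lam _
      · exact theta_sr_inr p lam _
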